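/- Let F be a field of characteristic zero and E a set with |E| ≥ 2, say containing distinct elements e1, e2. Let g be the free Lie algebra on E and U(g) = F[W] its enveloping algebra, identified with the monoid algebra of words. The linear functional h ∈ U(g)^* defined by h = φ_1 + φ_{e2} + φ_{e1 e2} + φ_{e2 e1 e2} + φ_{e1 e2 e1 e2} + ⋯ (i.e. h(w) = 1 if w is an alternating word ending in e2 or the empty word, appropriately alternating, and 0 otherwise) generates under the left regular action of U(g) on U(g)^* a finite-dimensional subspace, but h is not contained in the shuffle algebra ⊕_{w∈W} F φ_w. -/

import Mathlib

/-- The alternating words `1, e₂, e₁e₂, e₂e₁e₂, e₁e₂e₁e₂, ...`. -/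
def altWord {E : Type*} (e1 e2 : E) : ℕ → FreeMonoid E
  | 0 => 1
  | n + 1 => (if n % 2 = 0 then FreeMonoid.of e2 else FreeMonoid.of e1) * altWord e1 e2 n

-- The functional `h = φ_1 + φ_{e₂} + φ_{e₁e₂} + φ_{e₂e₁e₂} + ⋯` on
-- `U(g) = F[W]`, taking value `1` on all alternating words and `0` elsewhere.
open Classical in
noncomputable def altFun (F : Type*) [Field F] {E : Type*} (e1 e2 : E) :
    Module.Dual F (MonoidAlgebra F (FreeMonoid E)) :=
  (Finsupp.lsum F fun w : FreeMonoid E =>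
    if ∃ n : ℕ, w = altWord e1 e2 n then (LinearMap.id : F →ₗ[F] F) else 0)
    ∘ₗ (MonoidAlgebra.coeffLinearEquiv F).toLinearMap

namespace AltAux

variable {E : Type*} (e1 e2 : E)

lemma altWord_length (n : ℕ) : (FreeMonoid.toList (altWord e1 e2 n)).length = n := by
  induction n with
  | zero => rfl
  | succ n ih =>
    show (FreeMonoid.toList ((if n % 2 = 0 then FreeMonoid.of e2 else FreeMonoid.of e1) *
        altWord e1 e2 n)).length = n + 1
    rw [FreeMonoid.toList_mul, List.length_append, ih]
    split_ifs <;> simp [FreeMonoid.toList_of] <;> omega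

lemma altWord_inj {m n : ℕ} (h : altWord e1 e2 m = altWord e1 e2 n) : m = n := by
  have := congrArg (fun w => (FreeMonoid.toList w).length) h
  simpa [altWord_length] using this

lemma altWord_add (m k : ℕ) :
    altWord e1 e2 (m + k) =
      (if k % 2 = 0 then altWord e1 e2 m else altWord e2 e1 m) * altWord e1 e2 k := by
  induction m with
  | zero =>
    rw [Nat.zero_add]
    split_ifs <;> simp [altWord]
  | succ m ih =>
    have h1 : m + 1 + k = (m + k) + 1 := by omega
    rw [h1]
    by_cases hk : k % 2 = 0
    · have hmk : (m + k) % 2 = m % 2 := by omega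
      rw [if_pos hk]
      show (if (m + k) % 2 = 0 then FreeMonoid.of e2 else FreeMonoid.of e1) *
          altWord e1 e2 (m + k) =
        ((if m % 2 = 0 then FreeMonoid.of e2 else FreeMonoid.of e1) * altWord e1 e2 m) *
          altWord e1 e2 k
      rw [ih, if_pos hk, hmk, mul_assoc]
    · rw [if_neg hk]
      show (if (m + k) % 2 = 0 then FreeMonoid.of e2 else FreeMonoid.of e1) *
          altWord e1 e2 (m + k) =
        ((if m % 2 = 0 then FreeMonoid.of e1 else FreeMonoid.of e2) * altWord e2 e1 m) *
          altWord e1 e2 k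
      rw [ih, if_neg hk, mul_assoc]
      congr 1
      by_cases hm : m % 2 = 0
      · rw [if_neg (by omega), if_pos hm]
      · rw [if_pos (by omega), if_neg hm]

lemma suffix_altWord : ∀ (m : ℕ) (y w : FreeMonoid E), y * w = altWord e1 e2 m →
    ∃ k, w = altWord e1 e2 k := by
  intro m
  induction m with
  | zero =>
    intro y w h
    have h' : FreeMonoid.toList y ++ FreeMonoid.toList w = [] := h
    exact ⟨0, FreeMonoid.toList.injective (by exact (List.append_eq_nil_iff.mp h').2)⟩
  | succ m ih =>
    intro y w h
    have h' : FreeMonoid.toList y ++ FreeMonoid.toList w =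
        (if m % 2 = 0 then e2 else e1) :: FreeMonoid.toList (altWord e1 e2 m) := by
      have := congrArg FreeMonoid.toList h
      rw [FreeMonoid.toList_mul] at this
      rw [this]
      show FreeMonoid.toList ((if m % 2 = 0 then FreeMonoid.of e2 else FreeMonoid.of e1) *
        altWord e1 e2 m) = _
      rw [FreeMonoid.toList_mul]
      split_ifs <;> rfl
    cases hy : FreeMonoid.toList y with
    | nil =>
      refine ⟨m + 1, ?_⟩
      have : FreeMonoid.toList w = FreeMonoid.toList (altWord e1 e2 (m+1)) := by
        have := congrArg FreeMonoid.toList h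
        rw [FreeMonoid.toList_mul, hy] at this
        simpa using this
      exact FreeMonoid.toList.injective this
    | cons a t =>
      rw [hy] at h'
      simp only [List.cons_append, List.cons.injEq] at h'
      exact ih (FreeMonoid.ofList t) w (FreeMonoid.toList.injective (by simpa using h'.2))

lemma main_iff (k : ℕ) (y : FreeMonoid E) :
    (∃ m, y * altWord e1 e2 k = altWord e1 e2 m) ↔
      (∃ m, y = (if k % 2 = 0 then altWord e1 e2 m else altWord e2 e1 m)) := by
  constructor
  · rintro ⟨m, hm⟩
    refine ⟨(FreeMonoid.toList y).length, ?_⟩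
    have hlen : m = (FreeMonoid.toList y).length + k := by
      have := congrArg (fun w => (FreeMonoid.toList w).length) hm
      simp only [FreeMonoid.toList_mul, List.length_append, altWord_length] at this
      omega
    rw [hlen, altWord_add] at hm
    exact mul_right_cancel hm
  · rintro ⟨m, hm⟩
    exact ⟨m + k, by rw [altWord_add, ← hm]⟩

lemma main_iff_even {k : ℕ} (hk : k % 2 = 0) (y : FreeMonoid E) :
    (∃ m, y * altWord e1 e2 k = altWord e1 e2 m) ↔ (∃ m, y = altWord e1 e2 m) := by
  simpa [hk] using main_iff e1 e2 k y

lemma main_iff_odd {k : ℕ} (hk : ¬ k % 2 = 0) (y : FreeMonoid E) :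
    (∃ m, y * altWord e1 e2 k = altWord e1 e2 m) ↔ (∃ m, y = altWord e2 e1 m) := by
  simpa [hk] using main_iff e1 e2 k y

lemma none_iff {w : FreeMonoid E} (hw : ¬ ∃ k, w = altWord e1 e2 k) (y : FreeMonoid E) :
    ¬ ∃ m, y * w = altWord e1 e2 m := by
  rintro ⟨m, hm⟩
  exact hw (suffix_altWord e1 e2 m y w hm)

end AltAux

section Alg
variable (F : Type*) [Field F] {E : Type*} (e1 e2 : E)

open Classical in
lemma altFun_single (y : FreeMonoid E) (c : F) :
    altFun F e1 e2 (MonoidAlgebra.single y c) =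
      if ∃ n : ℕ, y = altWord e1 e2 n then c else 0 := by
  rw [altFun, LinearMap.comp_apply]
  erw [Finsupp.lsum_single]
  split_ifs <;> rfl

/-- The translation operator as a linear map. -/
noncomputable def transOp : MonoidAlgebra F (FreeMonoid E) →ₗ[F]
    Module.Dual F (MonoidAlgebra F (FreeMonoid E)) where
  toFun x := (altFun F e1 e2).comp (LinearMap.mulRight F x)
  map_add' x y := by
    ext z
    simp [mul_add]
  map_smul' c x := by
    ext z
    simp [mul_smul_comm]

lemma transOp_apply (x y : MonoidAlgebra F (FreeMonoid E)) :
    transOp F e1 e2 x y = altFun F e1 e2 (y * x) := rfl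

lemma transOp_single (w : FreeMonoid E) (b : F) :
    transOp F e1 e2 (MonoidAlgebra.single w b) ∈
      Submodule.span F {altFun F e1 e2, altFun (E := E) F e2 e1} := by
  classical
  by_cases hw : ∃ k, w = altWord e1 e2 k
  · obtain ⟨k, rfl⟩ := hw
    by_cases hk : k % 2 = 0
    · have : transOp F e1 e2 (MonoidAlgebra.single (altWord e1 e2 k) b) = b • altFun F e1 e2 := by
        refine MonoidAlgebra.lhom_ext' fun y => LinearMap.ext fun c => ?_
        simp only [transOp, LinearMap.coe_mk, AddHom.coe_mk, LinearMap.coe_comp,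
          Function.comp_apply, LinearMap.mulRight_apply, MonoidAlgebra.lsingle_apply]
        erw [MonoidAlgebra.single_mul_single]
        rw [LinearMap.smul_apply]
        erw [altFun_single, altFun_single]
        rw [if_congr (AltAux.main_iff_even e1 e2 hk y) rfl rfl]
        split_ifs <;> simp [smul_eq_mul, mul_comm]
      rw [this]
      exact Submodule.smul_mem _ _ (Submodule.subset_span (by simp))
    · have : transOp F e1 e2 (MonoidAlgebra.single (altWord e1 e2 k) b) = b • altFun F e2 e1 := by
        refine MonoidAlgebra.lhom_ext' fun y => LinearMap.ext fun c => ?_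
        simp only [transOp, LinearMap.coe_mk, AddHom.coe_mk, LinearMap.coe_comp,
          Function.comp_apply, LinearMap.mulRight_apply, MonoidAlgebra.lsingle_apply]
        erw [MonoidAlgebra.single_mul_single]
        rw [LinearMap.smul_apply]
        erw [altFun_single, altFun_single]
        rw [if_congr (AltAux.main_iff_odd e1 e2 hk y) rfl rfl]
        split_ifs <;> simp [smul_eq_mul, mul_comm]
      rw [this]
      exact Submodule.smul_mem _ _ (Submodule.subset_span (by simp))
  · have : transOp F e1 e2 (MonoidAlgebra.single w b) = 0 := by
      refine MonoidAlgebra.lhom_ext' fun y => LinearMap.ext fun c => ?_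
      simp only [transOp, LinearMap.coe_mk, AddHom.coe_mk, LinearMap.coe_comp,
        Function.comp_apply, LinearMap.mulRight_apply, MonoidAlgebra.lsingle_apply]
      erw [MonoidAlgebra.single_mul_single]
      erw [altFun_single]
      rw [if_neg (AltAux.none_iff e1 e2 hw y)]
      simp
    rw [this]
    exact Submodule.zero_mem _

end Alg

/-- for `|E| ≥ 2` the functional `h = φ_1 + φ_{e₂} + φ_{e₁e₂} + ⋯`
spans, under the left regular action `(x ▹ h)(y) = h(yx)` of `U(g)` on `U(g)^*`, a
finite-dimensional subspace, but `h` is not in the shuffle algebra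
`⊕_{w∈W} F φ_w` (the span of the dual-basis functionals). -/
theorem stmt8 {F : Type*} [Field F] [CharZero F] {E : Type*} {e1 e2 : E}
    (hne : e1 ≠ e2) :
    FiniteDimensional F
      (Submodule.span F (Set.range fun x : MonoidAlgebra F (FreeMonoid E) =>
        (altFun F e1 e2).comp (LinearMap.mulRight F x))) ∧
    altFun F e1 e2 ∉
      Submodule.span F (Set.range fun w : FreeMonoid E =>
        ((Finsupp.lapply w ∘ₗ (MonoidAlgebra.coeffLinearEquiv F).toLinearMap :
          Module.Dual F (MonoidAlgebra F (FreeMonoid E))))) := by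
  constructor
  · have hle : Submodule.span F (Set.range fun x : MonoidAlgebra F (FreeMonoid E) =>
        (altFun F e1 e2).comp (LinearMap.mulRight F x)) ≤
        Submodule.span F {altFun F e1 e2, altFun (E := E) F e2 e1} := by
      rw [Submodule.span_le]
      rintro _ ⟨x, rfl⟩
      rw [SetLike.mem_coe]
      beta_reduce
      rw [show (altFun F e1 e2).comp (LinearMap.mulRight F x) = transOp F e1 e2 x from rfl]
      induction x using MonoidAlgebra.induction_linear with
      | zero => rw [map_zero]; exact Submodule.zero_mem _
      | add f g hf hg => rw [map_add]; exact Submodule.add_mem _ hf hg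
      | single w b => exact transOp_single F e1 e2 w b
    have : FiniteDimensional F
        (Submodule.span F ({altFun F e1 e2, altFun (E := E) F e2 e1} :
          Set (Module.Dual F (MonoidAlgebra F (FreeMonoid E))))) :=
      FiniteDimensional.span_of_finite F (Set.toFinite _)
    exact Submodule.finiteDimensional_of_le hle
  · classical
    intro hmem
    rw [Finsupp.mem_span_range_iff_exists_finsupp] at hmem
    obtain ⟨c, hc⟩ := hmem
    have key : ∀ n : ℕ, c (altWord e1 e2 n) = 1 := by
      intro n
      have h1 := LinearMap.congr_fun hc (MonoidAlgebra.single (altWord e1 e2 n) 1)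
      rw [Finsupp.sum] at h1
      rw [LinearMap.sum_apply] at h1
      have h2 : (altFun F e1 e2) (MonoidAlgebra.single (altWord e1 e2 n) (1 : F)) = 1 := by
        erw [altFun_single]
        rw [if_pos ⟨n, rfl⟩]
      rw [h2] at h1
      have h3 : ∀ w ∈ c.support,
          (c w • (Finsupp.lapply w ∘ₗ (MonoidAlgebra.coeffLinearEquiv F).toLinearMap :
            Module.Dual F (MonoidAlgebra F (FreeMonoid E))))
            (MonoidAlgebra.single (altWord e1 e2 n) (1 : F)) =
          if altWord e1 e2 n = w then c w else 0 := by
        intro w _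
        rw [LinearMap.smul_apply, LinearMap.comp_apply, Finsupp.lapply_apply]
        erw [Finsupp.single_apply]
        split_ifs <;> simp
      have h4 : (∑ w ∈ c.support, if altWord e1 e2 n = w then c w else 0) = 1 :=
        (Finset.sum_congr rfl h3).symm.trans h1
      rw [Finset.sum_ite_eq] at h4
      by_cases hmem2 : altWord e1 e2 n ∈ c.support
      · rwa [if_pos hmem2] at h4
      · rw [if_neg hmem2] at h4
        exact absurd h4.symm one_ne_zero
    have hinf : (↑c.support : Set (FreeMonoid E)).Infinite := by
      apply Set.infinite_of_injective_forall_mem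
        (f := fun n : ℕ => altWord e1 e2 n)
      · exact fun a b h => AltAux.altWord_inj e1 e2 h
      · intro n
        rw [Finset.mem_coe, Finsupp.mem_support_iff, key n]
        exact one_ne_zero
    exact hinf c.support.finite_toSet
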